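/- Let (P, w) be a decision list of length n over α and (Q, v) a decision list of length m over α, and assume both are total at every x : α. Define the combined decision list over Fin n × Fin m, ordered lexicographically, whose rule (i, j) has body P i x ∧ Q j x and value w i + v j. Then the combined list is total at every x, and for every x its value at x equals the value of the first list at x plus the value of the second list at x. -/
import Mathlib


/-- The lexicographic order on `Fin n × Fin m`: `(i, j) < (i', j')` iff `i < i'`, or
`i = i'` and `j < j'`. -/
def lexLT {n m : ℕ} (p q : Fin n × Fin m) : Prop :=
  p.1 < q.1 ∨ (p.1 = q.1 ∧ p.2 < q.2)

/-- Correctness of the pairwise combination step for boosted (sum-combined) decision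
lists.  Let `(P, w)` and `(Q, v)` be decision lists over `α`, both total at every `x`.
Form the combined decision list over `Fin n × Fin m`, ordered lexicographically, whose
rule `(i, j)` has body `P i x ∧ Q j x` and value `w i + v j`.  Then the combined list
is total at every `x`, and its value at `x` — the value `w p.1 + v p.2` of the
lexicographically first satisfied combined rule `p` — equals the value of the first
list at `x` (namely `w i` for the least `i` with `P i x`) plus the value of the second
list at `x`. -/
theorem combined_decision_list_value_eq_sum
    {α : Type*} {n m : ℕ}
    (P : Fin n → α → Prop) (w : Fin n → ℝ)
    (Q : Fin m → α → Prop) (v : Fin m → ℝ)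
    (hP : ∀ x : α, ∃ i, P i x) (hQ : ∀ x : α, ∃ j, Q j x) :
    ∀ x : α,
      (∃ p : Fin n × Fin m, P p.1 x ∧ Q p.2 x) ∧
      ∀ (p : Fin n × Fin m) (i : Fin n) (j : Fin m),
        ((P p.1 x ∧ Q p.2 x) ∧ ∀ q : Fin n × Fin m, lexLT q p → ¬ (P q.1 x ∧ Q q.2 x)) →
        (P i x ∧ ∀ k < i, ¬ P k x) →
        (Q j x ∧ ∀ k < j, ¬ Q k x) →
        w p.1 + v p.2 = w i + v j := by
  intro x
  refine ⟨?_, ?_⟩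
  · obtain ⟨i, hi⟩ := hP x
    obtain ⟨j, hj⟩ := hQ x
    exact ⟨(i, j), hi, hj⟩
  · rintro p i j ⟨⟨hp1, hp2⟩, hmin⟩ ⟨hi, hileast⟩ ⟨hj, hjleast⟩
    have h1 : p.1 = i := by
      rcases lt_trichotomy p.1 i with h | h | h
      · exact absurd hp1 (hileast _ h)
      · exact h
      · exact absurd ⟨hi, hj⟩ (hmin (i, j) (Or.inl h))
    have h2 : p.2 = j := by
      rcases lt_trichotomy p.2 j with h | h | h
      · exact absurd hp2 (hjleast _ h)
      · exact h
      · exact absurd ⟨h1 ▸ hi, hj⟩ (hmin (p.1, j) (Or.inr ⟨rfl, h⟩))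
    rw [h1, h2]
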